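/- Let φ : ℝ → ℝ be continuous, and let ψ : ℝ² ∖ {0} → ℝ be differentiable with ∇ψ(x) = φ(x/‖x‖) · x^⊥ / ‖x‖² for all x ≠ 0, where x^⊥ := (−x₂, x₁). In ℝ^{m+n} with standard orthonormal coordinates e₁, …, e_{m+n}, write x(w) := (w₁, w₂) ∈ ℝ² and x^⊥(w) := −w₂ e₁ + w₁ e₂, and define the vector field X(w) := ψ(x(w)) · x^⊥(w) on {w : x(w) ≠ 0}. Then X is differentiable on its domain, and for every point z with x(z) ≠ 0 and every orthonormal family v₁, …, vₘ of vectors in ℝ^{m+n}, one has ∑_{i=1}^{m} ⟪(DX)(z) vᵢ, vᵢ⟫ = (φ(x(z)/‖x(z)‖) / ‖x(z)‖²) · ∑_{i=1}^{m} ⟪x^⊥(z), vᵢ⟫². -/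

import Mathlib

open RealInnerProductSpace

/-- The first two coordinates of `w ∈ ℝ^d` (`d ≥ 2`), as a point of the Euclidean plane. -/
noncomputable def planeCoord (d : ℕ) (hd : 2 ≤ d) (w : EuclideanSpace ℝ (Fin d)) :
    EuclideanSpace ℝ (Fin 2) :=
  WithLp.toLp 2 ![w ⟨0, by omega⟩, w ⟨1, by omega⟩]

/-- The rotated vector `x^⊥(w) = -w₂ e₁ + w₁ e₂` in `ℝ^d` (`d ≥ 2`). -/
noncomputable def planePerp (d : ℕ) (hd : 2 ≤ d) (w : EuclideanSpace ℝ (Fin d)) :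
    EuclideanSpace ℝ (Fin d) :=
  w ⟨0, by omega⟩ • EuclideanSpace.single ⟨1, by omega⟩ (1 : ℝ) -
    w ⟨1, by omega⟩ • EuclideanSpace.single ⟨0, by omega⟩ (1 : ℝ)

noncomputable def coordCLM (d : ℕ) (hd : 2 ≤ d) :
    EuclideanSpace ℝ (Fin d) →L[ℝ] EuclideanSpace ℝ (Fin 2) :=
  LinearMap.toContinuousLinearMap
  { toFun := fun w => planeCoord d hd w
    map_add' := by
      intro w w'
      ext j
      fin_cases j <;>
        simp [planeCoord, PiLp.add_apply]
    map_smul' := by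
      intro c w
      ext j
      fin_cases j <;>
        simp [planeCoord, PiLp.smul_apply] }

noncomputable def perpCLM (d : ℕ) (hd : 2 ≤ d) :
    EuclideanSpace ℝ (Fin d) →L[ℝ] EuclideanSpace ℝ (Fin d) :=
  LinearMap.toContinuousLinearMap
  { toFun := fun w => planePerp d hd w
    map_add' := by
      intro w w'
      simp only [planePerp, PiLp.add_apply, add_smul]
      abel
    map_smul' := by
      intro c w
      simp only [planePerp, PiLp.smul_apply, RingHom.id_apply, smul_sub, smul_smul,
        smul_eq_mul] }

lemma coordCLM_apply (d : ℕ) (hd : 2 ≤ d) (w : EuclideanSpace ℝ (Fin d)) :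
    coordCLM d hd w = planeCoord d hd w := rfl

lemma perpCLM_apply (d : ℕ) (hd : 2 ≤ d) (w : EuclideanSpace ℝ (Fin d)) :
    perpCLM d hd w = planePerp d hd w := rfl

lemma inner_planePerp_self (d : ℕ) (hd : 2 ≤ d) (u : EuclideanSpace ℝ (Fin d)) :
    ⟪planePerp d hd u, u⟫ = 0 := by
  simp only [planePerp, inner_sub_left, real_inner_smul_left,
    EuclideanSpace.inner_single_left, starRingEnd_apply, star_one, one_mul]
  ring

lemma inner_grad_coord (d : ℕ) (hd : 2 ≤ d) (z u : EuclideanSpace ℝ (Fin d))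
    (A : EuclideanSpace ℝ (Fin 2))
    (h0 : A 0 = -(planeCoord d hd z 1)) (h1 : A 1 = planeCoord d hd z 0) :
    ⟪A, planeCoord d hd u⟫ = ⟪planePerp d hd z, u⟫ := by
  rw [PiLp.inner_apply, Fin.sum_univ_two, h0, h1]
  simp only [planePerp, inner_sub_left, real_inner_smul_left,
    EuclideanSpace.inner_single_left, starRingEnd_apply, star_one, one_mul,
    RCLike.inner_apply, smul_eq_mul, star_trivial,
    planeCoord, Matrix.cons_val_zero, Matrix.cons_val_one, Matrix.head_cons]
  ring

theorem tangential_divergence_winding_field (φ : ℝ → ℝ) (hφc : Continuous φ)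
    (ψ : EuclideanSpace ℝ (Fin 2) → ℝ)
    (hψ : ∀ x : EuclideanSpace ℝ (Fin 2), x ≠ 0 → ∀ t : ℝ,
      ‖x‖⁻¹ • x = (WithLp.toLp 2 ![Real.cos t, Real.sin t] : EuclideanSpace ℝ (Fin 2)) →
      HasGradientAt ψ
        ((φ t / ‖x‖ ^ 2) • (WithLp.toLp 2 ![-(x 1), x 0] : EuclideanSpace ℝ (Fin 2))) x)
    (m n : ℕ) (hmn : 2 ≤ m + n)
    (X : EuclideanSpace ℝ (Fin (m + n)) → EuclideanSpace ℝ (Fin (m + n)))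
    (hX : ∀ w, X w = ψ (planeCoord (m + n) hmn w) • planePerp (m + n) hmn w)
    (z : EuclideanSpace ℝ (Fin (m + n))) (hz : planeCoord (m + n) hmn z ≠ 0)
    (v : Fin m → EuclideanSpace ℝ (Fin (m + n))) (hv : Orthonormal ℝ v) :
    DifferentiableAt ℝ X z ∧
      ∀ t : ℝ,
        ‖planeCoord (m + n) hmn z‖⁻¹ • planeCoord (m + n) hmn z =
          (WithLp.toLp 2 ![Real.cos t, Real.sin t] : EuclideanSpace ℝ (Fin 2)) →
        ∑ i, ⟪fderiv ℝ X z (v i), v i⟫ =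
          (φ t / ‖planeCoord (m + n) hmn z‖ ^ 2) *
            ∑ i, ⟪planePerp (m + n) hmn z, v i⟫ ^ 2 := by
  set x : EuclideanSpace ℝ (Fin 2) := planeCoord (m + n) hmn z with hx
  have hXeq : X = fun w => ψ (coordCLM (m + n) hmn w) • perpCLM (m + n) hmn w := by
    funext w; rw [hX, coordCLM_apply, perpCLM_apply]
  -- the derivative of X at z given a gradient datum for ψ at x
  have key : ∀ t : ℝ,
      ‖x‖⁻¹ • x = (WithLp.toLp 2 ![Real.cos t, Real.sin t] : EuclideanSpace ℝ (Fin 2)) →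
      HasFDerivAt X
        (ψ x • perpCLM (m + n) hmn +
          (((InnerProductSpace.toDual ℝ (EuclideanSpace ℝ (Fin 2)))
              ((φ t / ‖x‖ ^ 2) • (WithLp.toLp 2 ![-(x 1), x 0] : EuclideanSpace ℝ (Fin 2)))).comp
            (coordCLM (m + n) hmn)).smulRight (planePerp (m + n) hmn z)) z := by
    intro t ht
    have hψd := (hψ x hz t ht).hasFDerivAt
    have hc : HasFDerivAt (fun w => ψ (coordCLM (m + n) hmn w))
        (((InnerProductSpace.toDual ℝ (EuclideanSpace ℝ (Fin 2)))
            ((φ t / ‖x‖ ^ 2) • (WithLp.toLp 2 ![-(x 1), x 0] : EuclideanSpace ℝ (Fin 2)))).comp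
          (coordCLM (m + n) hmn)) z :=
      hψd.comp z (coordCLM (m + n) hmn).hasFDerivAt
    have hP := (perpCLM (m + n) hmn).hasFDerivAt (x := z)
    have := hc.smul hP
    rw [hXeq]
    exact this
  -- existence of some angle t₀
  obtain ⟨t0, ht0⟩ : ∃ t : ℝ,
      ‖x‖⁻¹ • x = (WithLp.toLp 2 ![Real.cos t, Real.sin t] : EuclideanSpace ℝ (Fin 2)) := by
    have hx0 : ‖x‖ ≠ 0 := norm_ne_zero_iff.mpr hz
    have hzc : (⟨x 0, x 1⟩ : ℂ) ≠ 0 := by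
      intro h
      apply hz
      ext j
      fin_cases j
      · exact congrArg Complex.re h
      · exact congrArg Complex.im h
    have hnorm : ‖(⟨x 0, x 1⟩ : ℂ)‖ = ‖x‖ := by
      rw [EuclideanSpace.norm_eq, Fin.sum_univ_two, Complex.norm_def, Complex.normSq_mk]
      simp [Real.norm_eq_abs, sq_abs, pow_two]
    refine ⟨Complex.arg ⟨x 0, x 1⟩, ?_⟩
    ext j
    fin_cases j
    · rw [show ((⟨0, by omega⟩ : Fin 2)) = 0 from rfl]
      simp only [PiLp.smul_apply, smul_eq_mul, Matrix.cons_val_zero]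
      rw [Complex.cos_arg hzc, hnorm]
      exact (inv_mul_eq_div _ _).trans (by rfl)
    · rw [show ((⟨1, by omega⟩ : Fin 2)) = 1 from rfl]
      simp only [PiLp.smul_apply, smul_eq_mul, Matrix.cons_val_one, Matrix.head_cons]
      rw [Complex.sin_arg, hnorm]
      exact (inv_mul_eq_div _ _).trans (by rfl)
  refine ⟨(key t0 ht0).differentiableAt, ?_⟩
  intro t ht
  have hD := (key t ht).fderiv
  rw [hD]
  have hterm : ∀ i, ⟪(ψ x • perpCLM (m + n) hmn +
      (((InnerProductSpace.toDual ℝ (EuclideanSpace ℝ (Fin 2)))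
          ((φ t / ‖x‖ ^ 2) • (WithLp.toLp 2 ![-(x 1), x 0] : EuclideanSpace ℝ (Fin 2)))).comp
        (coordCLM (m + n) hmn)).smulRight (planePerp (m + n) hmn z)) (v i), v i⟫ =
      (φ t / ‖x‖ ^ 2) * ⟪planePerp (m + n) hmn z, v i⟫ ^ 2 := by
    intro i
    simp only [ContinuousLinearMap.add_apply, ContinuousLinearMap.smul_apply,
      ContinuousLinearMap.smulRight_apply, ContinuousLinearMap.comp_apply,
      InnerProductSpace.toDual_apply_apply, inner_add_left, real_inner_smul_left,
      perpCLM_apply, coordCLM_apply]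
    rw [inner_planePerp_self,
      inner_grad_coord (m + n) hmn z (v i) _ (by simp [hx, planeCoord])
        (by simp [hx, planeCoord])]
    ring
  rw [Finset.sum_congr rfl fun i _ => hterm i, ← Finset.mul_sum]
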